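/- Let G₁, G₂ be connected bipartite graphs with bipartitions each of size at least 3, and let H₁, H₂ be constructed by replacing each edge ab by a path a–c_e–b and adding all edges between the two parts. Then G₁ and G₂ are isomorphic if and only if H₁ and H₂ are isomorphic. -/

import Mathlib

/-- The graph `H` built from a bipartite graph `G` with bipartition `(A, B)`:
vertices are `A ∪ B` (the original vertices) together with one new vertex `c_e`
per edge `e`; all edges between `A` and `B` are present, and each `c_e` is
adjacent exactly to the two endpoints of `e`. -/
def Hgraph {V : Type*} (G : SimpleGraph V) (A B : Set V) :
    SimpleGraph (V ⊕ G.edgeSet) where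
  Adj x y :=
    match x, y with
    | Sum.inl u, Sum.inl v => u ≠ v ∧ ((u ∈ A ∧ v ∈ B) ∨ (u ∈ B ∧ v ∈ A))
    | Sum.inl u, Sum.inr e => u ∈ (e : Sym2 V)
    | Sum.inr e, Sum.inl u => u ∈ (e : Sym2 V)
    | Sum.inr _, Sum.inr _ => False
  symm := ⟨by
    rintro (u | e) (v | f) h <;> simp_all <;> tauto⟩
  loopless := ⟨by
    rintro (u | e) h <;> simp_all⟩

/-- The order relation of the poset `P_H` on `A ∪ B ∪ C`:
`a ⪯ b` for `a ∈ A`, `b ∈ B`; `a ⪯ c_e` iff `a ∈ A` is an endpoint of `e`;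
`c_e ⪯ b` iff `b ∈ B` is an endpoint of `e`; plus reflexivity. -/
def PHle {V : Type*} (G : SimpleGraph V) (A B : Set V) :
    (V ⊕ G.edgeSet) → (V ⊕ G.edgeSet) → Prop
  | Sum.inl u, Sum.inl v => u = v ∨ (u ∈ A ∧ v ∈ B)
  | Sum.inl u, Sum.inr e => u ∈ A ∧ u ∈ (e : Sym2 V)
  | Sum.inr e, Sum.inl v => v ∈ B ∧ v ∈ (e : Sym2 V)
  | Sum.inr e, Sum.inr f => e = f


section Helpers

open SimpleGraph

variable {V : Type*} {G : SimpleGraph V} {A B : Set V}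

lemma memB_iff_not_memA (hdisj : Disjoint A B) (hcover : A ∪ B = Set.univ) (u : V) :
    u ∈ B ↔ u ∉ A := by
  constructor
  · intro hb ha
    exact Set.disjoint_left.mp hdisj ha hb
  · intro ha
    have : u ∈ A ∪ B := hcover ▸ Set.mem_univ u
    rcases this with h | h
    · exact absurd h ha
    · exact h

lemma adj_flip (hdisj : Disjoint A B)
    (hedge : ∀ e : G.edgeSet, ∃ a ∈ A, ∃ b ∈ B, (e : Sym2 V) = s(a, b))
    {u v : V} (h : G.Adj u v) : ¬(u ∈ A ↔ v ∈ A) := by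
  obtain ⟨a, ha, b, hb, he⟩ := hedge ⟨s(u, v), h⟩
  have hab : a ∉ B := Set.disjoint_left.mp hdisj ha
  have hba : b ∉ A := Set.disjoint_right.mp hdisj hb
  rw [Sym2.eq_iff] at he
  rcases he with ⟨rfl, rfl⟩ | ⟨rfl, rfl⟩ <;> tauto

lemma walk_parity (hdisj : Disjoint A B)
    (hedge : ∀ e : G.edgeSet, ∃ a ∈ A, ∃ b ∈ B, (e : Sym2 V) = s(a, b))
    {u v : V} (w : G.Walk u v) : ((u ∈ A ↔ v ∈ A) ↔ Even w.length) := by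
  induction w with
  | nil => simp
  | cons h p ih =>
    have hflip := adj_flip hdisj hedge h
    rw [SimpleGraph.Walk.length_cons, Nat.even_add_one, ← ih]
    tauto

lemma opp_iff (hdisj : Disjoint A B) (hcover : A ∪ B = Set.univ) {u v : V} :
    ((u ∈ A ∧ v ∈ B) ∨ (u ∈ B ∧ v ∈ A)) ↔ ¬(u ∈ A ↔ v ∈ A) := by
  have hu := memB_iff_not_memA hdisj hcover u
  have hv := memB_iff_not_memA hdisj hcover v
  tauto

lemma sym2_three_not_mem (e : Sym2 V) {x y z : V} (hxy : x ≠ y) (hxz : x ≠ z)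
    (hyz : y ≠ z) (hx : x ∈ e) (hy : y ∈ e) (hz : z ∈ e) : False := by
  induction e using Sym2.ind with
  | _ a b =>
    rw [Sym2.mem_iff] at hx hy hz
    rcases hx with rfl | rfl <;> rcases hy with rfl | rfl <;>
      rcases hz with rfl | rfl <;> simp_all

lemma sym2_eq_of_two_mem {e : Sym2 V} {x y : V} (hx : x ∈ e) (hy : y ∈ e)
    (hxy : x ≠ y) : e = s(x, y) := by
  induction e using Sym2.ind with
  | _ a b =>
    rw [Sym2.mem_iff] at hx hy
    rcases hx with rfl | rfl <;> rcases hy with rfl | rfl <;> simp_all [Sym2.eq_swap]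

end Helpers

section Main

open SimpleGraph Sum

variable {V₁ V₂ : Type*} [Finite V₁] [Finite V₂]
    {G₁ : SimpleGraph V₁} {G₂ : SimpleGraph V₂}
    {A₁ B₁ : Set V₁} {A₂ B₂ : Set V₂}

lemma exists_inl_aux
    (φ : Hgraph G₁ A₁ B₁ ≃g Hgraph G₂ A₂ B₂) {u : V₁} {f : G₂.edgeSet}
    (h : φ (Sum.inl u) = Sum.inr f) (S : Set V₁) (hS : 3 ≤ S.ncard)
    (hadj : ∀ b ∈ S, (Hgraph G₁ A₁ B₁).Adj (inl u) (inl b)) : False := by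
  obtain ⟨b₁, hb₁, b₂, hb₂, b₃, hb₃, h12, h13, h23⟩ :=
    (Set.two_lt_ncard (Set.toFinite _)).mp (by omega : 2 < S.ncard)
  have key : ∀ b ∈ S, ∃ w, φ (inl b) = inl w ∧ w ∈ (f : Sym2 V₂) := by
    intro b hb
    have h2 : (Hgraph G₂ A₂ B₂).Adj (φ (inl u)) (φ (inl b)) := φ.map_rel_iff.mpr (hadj b hb)
    rw [h] at h2
    cases hb' : φ (inl b) with
    | inl w => rw [hb'] at h2; exact ⟨w, rfl, h2⟩
    | inr g => rw [hb'] at h2; exact absurd h2 (by simp [Hgraph])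
  obtain ⟨w₁, hw₁, hm₁⟩ := key b₁ hb₁
  obtain ⟨w₂, hw₂, hm₂⟩ := key b₂ hb₂
  obtain ⟨w₃, hw₃, hm₃⟩ := key b₃ hb₃
  have hinj : ∀ {x y : V₁} {w : V₂}, φ (inl x) = inl w → φ (inl y) = inl w → x = y := by
    intro x y w hx hy
    exact inl.inj (φ.injective (hx.trans hy.symm))
  exact sym2_three_not_mem (f : Sym2 V₂)
    (fun hw => h12 (hinj hw₁ (by rw [hw]; exact hw₂)))
    (fun hw => h13 (hinj hw₁ (by rw [hw]; exact hw₃)))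
    (fun hw => h23 (hinj hw₂ (by rw [hw]; exact hw₃))) hm₁ hm₂ hm₃

/-- Any original vertex is mapped to an original vertex by an iso of the `H` graphs. -/
lemma exists_inl
    (hdisj₁ : Disjoint A₁ B₁) (hcover₁ : A₁ ∪ B₁ = Set.univ)
    (hA₁ : 3 ≤ A₁.ncard) (hB₁ : 3 ≤ B₁.ncard)
    (φ : Hgraph G₁ A₁ B₁ ≃g Hgraph G₂ A₂ B₂) (u : V₁) :
    ∃ v, φ (Sum.inl u) = Sum.inl v := by
  cases h : φ (Sum.inl u) with
  | inl v => exact ⟨v, rfl⟩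
  | inr f =>
    exfalso
    have hu : u ∈ A₁ ∪ B₁ := hcover₁ ▸ Set.mem_univ u
    rcases hu with huA | huB
    · refine exists_inl_aux φ h B₁ hB₁ (fun b hb => ?_)
      exact ⟨fun huv => Set.disjoint_left.mp hdisj₁ huA (huv ▸ hb), Or.inl ⟨huA, hb⟩⟩
    · refine exists_inl_aux φ h A₁ hA₁ (fun b hb => ?_)
      exact ⟨fun huv => Set.disjoint_left.mp hdisj₁ hb (huv ▸ huB), Or.inr ⟨huB, hb⟩⟩


lemma adj_map_of_Hiso
    (φ : Hgraph G₁ A₁ B₁ ≃g Hgraph G₂ A₂ B₂) (ψ : V₁ → V₂)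
    (hψ : ∀ u, φ (Sum.inl u) = Sum.inl (ψ u))
    (hinr : ∀ e : G₁.edgeSet, ∃ f, φ (Sum.inr e) = Sum.inr f)
    {u v : V₁} (h : G₁.Adj u v) : G₂.Adj (ψ u) (ψ v) := by
  set e : G₁.edgeSet := ⟨s(u, v), h⟩ with he
  obtain ⟨f, hf⟩ := hinr e
  have h1 : (Hgraph G₁ A₁ B₁).Adj (inl u) (inr e) := by
    show u ∈ (e : Sym2 V₁); simp [he]
  have h1' : (Hgraph G₁ A₁ B₁).Adj (inl v) (inr e) := by
    show v ∈ (e : Sym2 V₁); simp [he]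
  have h2 : (Hgraph G₂ A₂ B₂).Adj (inl (ψ u)) (inr f) := by
    have := φ.map_rel_iff.mpr h1; rwa [hψ u, hf] at this
  have h2' : (Hgraph G₂ A₂ B₂).Adj (inl (ψ v)) (inr f) := by
    have := φ.map_rel_iff.mpr h1'; rwa [hψ v, hf] at this
  have hmu : ψ u ∈ (f : Sym2 V₂) := h2
  have hmv : ψ v ∈ (f : Sym2 V₂) := h2'
  have hne : ψ u ≠ ψ v := by
    intro hx
    exact h.ne (inl.inj (φ.injective (((hψ u).trans (by rw [hx])).trans (hψ v).symm)))
  have : (f : Sym2 V₂) = s(ψ u, ψ v) := sym2_eq_of_two_mem hmu hmv hne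
  have hf2 := f.property
  rw [this] at hf2
  exact hf2

lemma iso_of_Hiso
    (hdisj₁ : Disjoint A₁ B₁) (hcover₁ : A₁ ∪ B₁ = Set.univ)
    (hdisj₂ : Disjoint A₂ B₂) (hcover₂ : A₂ ∪ B₂ = Set.univ)
    (hA₁ : 3 ≤ A₁.ncard) (hB₁ : 3 ≤ B₁.ncard)
    (hA₂ : 3 ≤ A₂.ncard) (hB₂ : 3 ≤ B₂.ncard)
    (φ : Hgraph G₁ A₁ B₁ ≃g Hgraph G₂ A₂ B₂) : Nonempty (G₁ ≃g G₂) := by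
  choose ψ hψ using fun u => exists_inl hdisj₁ hcover₁ hA₁ hB₁ φ u
  choose ψ' hψ' using fun v => exists_inl hdisj₂ hcover₂ hA₂ hB₂ φ.symm v
  have linv : Function.LeftInverse ψ' ψ := by
    intro u
    have h1 : φ.symm (inl (ψ u)) = inl u := by rw [← hψ u]; exact φ.symm_apply_apply _
    exact inl.inj ((hψ' (ψ u)).symm.trans h1)
  have rinv : Function.RightInverse ψ' ψ := by
    intro v
    have h1 : φ (inl (ψ' v)) = inl v := by rw [← hψ' v]; exact φ.apply_symm_apply _
    exact inl.inj ((hψ (ψ' v)).symm.trans h1)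
  have hinr : ∀ e : G₁.edgeSet, ∃ f, φ (inr e) = inr f := by
    intro e
    cases h : φ (inr e) with
    | inr f => exact ⟨f, rfl⟩
    | inl v =>
      exfalso
      have : φ.symm (inl v) = inr e := by rw [← h]; exact φ.symm_apply_apply _
      rw [hψ' v] at this
      exact Sum.inl_ne_inr this
  have hinr' : ∀ f : G₂.edgeSet, ∃ e, φ.symm (inr f) = inr e := by
    intro f
    cases h : φ.symm (inr f) with
    | inr e => exact ⟨e, rfl⟩
    | inl u =>
      exfalso
      have : φ (inl u) = inr f := by rw [← h]; exact φ.apply_symm_apply _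
      rw [hψ u] at this
      exact Sum.inl_ne_inr this
  refine ⟨⟨⟨ψ, ψ', linv, rinv⟩, ?_⟩⟩
  intro u v
  simp only [Equiv.coe_fn_mk]
  constructor
  · intro h
    have := adj_map_of_Hiso φ.symm ψ' hψ' hinr' h
    rwa [linv u, linv v] at this
  · exact adj_map_of_Hiso φ ψ hψ hinr


def Hiso_of_iso
    (hconn₁ : G₁.Connected)
    (hdisj₁ : Disjoint A₁ B₁) (hcover₁ : A₁ ∪ B₁ = Set.univ)
    (hedge₁ : ∀ e : G₁.edgeSet, ∃ a ∈ A₁, ∃ b ∈ B₁, (e : Sym2 V₁) = s(a, b))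
    (hdisj₂ : Disjoint A₂ B₂) (hcover₂ : A₂ ∪ B₂ = Set.univ)
    (hedge₂ : ∀ e : G₂.edgeSet, ∃ a ∈ A₂, ∃ b ∈ B₂, (e : Sym2 V₂) = s(a, b))
    (ρ : G₁ ≃g G₂) : Hgraph G₁ A₁ B₁ ≃g Hgraph G₂ A₂ B₂ where
  toEquiv := Equiv.sumCongr ρ.toEquiv ρ.mapEdgeSet
  map_rel_iff' := by
    rintro (u | e) (v | f)
    · show (Hgraph G₂ A₂ B₂).Adj (inl (ρ u)) (inl (ρ v)) ↔
        (Hgraph G₁ A₁ B₁).Adj (inl u) (inl v)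
      have key : ((ρ u ∈ A₂ ∧ ρ v ∈ B₂) ∨ (ρ u ∈ B₂ ∧ ρ v ∈ A₂)) ↔
          ((u ∈ A₁ ∧ v ∈ B₁) ∨ (u ∈ B₁ ∧ v ∈ A₁)) := by
        obtain ⟨w⟩ := hconn₁.preconnected u v
        have p1 := walk_parity hdisj₁ hedge₁ w
        have p2 := walk_parity hdisj₂ hedge₂ (w.map ρ.toHom)
        rw [SimpleGraph.Walk.length_map] at p2
        have p2' : ((ρ u ∈ A₂ ↔ ρ v ∈ A₂) ↔ Even w.length) := p2
        rw [opp_iff hdisj₁ hcover₁, opp_iff hdisj₂ hcover₂, p1, p2']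
      exact and_congr ρ.toEquiv.injective.ne_iff key
    · show ρ u ∈ (ρ.mapEdgeSet f : Sym2 V₂) ↔ u ∈ (f : Sym2 V₁)
      show ρ u ∈ Sym2.map ρ (f : Sym2 V₁) ↔ u ∈ (f : Sym2 V₁)
      rw [Sym2.mem_map]
      constructor
      · rintro ⟨a, ha, hae⟩; rwa [← ρ.toEquiv.injective hae]
      · intro h; exact ⟨u, h, rfl⟩
    · show ρ v ∈ (ρ.mapEdgeSet e : Sym2 V₂) ↔ v ∈ (e : Sym2 V₁)
      show ρ v ∈ Sym2.map ρ (e : Sym2 V₁) ↔ v ∈ (e : Sym2 V₁)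
      rw [Sym2.mem_map]
      constructor
      · rintro ⟨a, ha, hae⟩; rwa [← ρ.toEquiv.injective hae]
      · intro h; exact ⟨v, h, rfl⟩
    · exact Iff.rfl

end Main

/-- Two connected bipartite graphs (with parts of size at least 3) are
isomorphic iff the corresponding graphs `H₁` and `H₂` are isomorphic. -/
theorem iso_iff_Hgraph_iso
    {V₁ V₂ : Type*} [Finite V₁] [Finite V₂]
    (G₁ : SimpleGraph V₁) (G₂ : SimpleGraph V₂)
    (A₁ B₁ : Set V₁) (A₂ B₂ : Set V₂)
    (hconn₁ : G₁.Connected) (hconn₂ : G₂.Connected)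
    (hdisj₁ : Disjoint A₁ B₁) (hcover₁ : A₁ ∪ B₁ = Set.univ)
    (hedge₁ : ∀ e : G₁.edgeSet, ∃ a ∈ A₁, ∃ b ∈ B₁, (e : Sym2 V₁) = s(a, b))
    (hdisj₂ : Disjoint A₂ B₂) (hcover₂ : A₂ ∪ B₂ = Set.univ)
    (hedge₂ : ∀ e : G₂.edgeSet, ∃ a ∈ A₂, ∃ b ∈ B₂, (e : Sym2 V₂) = s(a, b))
    (hA₁ : 3 ≤ A₁.ncard) (hB₁ : 3 ≤ B₁.ncard)
    (hA₂ : 3 ≤ A₂.ncard) (hB₂ : 3 ≤ B₂.ncard) :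
    Nonempty (G₁ ≃g G₂) ↔ Nonempty (Hgraph G₁ A₁ B₁ ≃g Hgraph G₂ A₂ B₂) := by
  constructor
  · rintro ⟨ρ⟩
    exact ⟨Hiso_of_iso hconn₁ hdisj₁ hcover₁ hedge₁ hdisj₂ hcover₂ hedge₂ ρ⟩
  · rintro ⟨φ⟩
    exact iso_of_Hiso hdisj₁ hcover₁ hdisj₂ hcover₂ hA₁ hB₁ hA₂ hB₂ φ
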